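/- For integers m ≥ 0 and 0 ≤ j ≤ 2m+1, the middle-row entries of the symmetric Krawtchouk matrix of order 2m+1 satisfy C(2m+1, j) · Φ^{2m+1}_{m,j} = (−1)^{⌊j/2⌋} · C(m, ⌊j/2⌋) · C(2m+1, m). -/

import Mathlib

open Polynomial Finset

/-- Symmetric Krawtchouk values:
`Φ^N_{n,j} = ∑_k (-1)^k C(j,k) C(N-j, n-k)`, the coefficient of `z^n` in
`(1+z)^(N-j) (1-z)^j`. -/
def symKrawtchouk (N n j : ℕ) : ℤ :=
  ∑ k ∈ Finset.range (j + 1),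
    if k ≤ n then (-1 : ℤ) ^ k * (j.choose k) * ((N - j).choose (n - k)) else 0

private lemma lemA (m j k : ℕ) (hkj : k ≤ j) (hkm : k ≤ m) (hj : j ≤ 2 * m + 1) :
    (2 * m + 1).choose j * (j.choose k * ((2 * m + 1 - j).choose (m - k))) =
    (2 * m + 1).choose m * (m.choose k * ((m + 1).choose (j - k))) := by
  by_cases h : j ≤ m + 1 + k
  · -- both sides equal the trinomial coefficient
    have h1 : (2*m+1).choose j * j.choose k
        = (2*m+1).choose k * ((2*m+1-k).choose (j-k)) :=
      Nat.choose_mul hkj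
    have h2 : (2*m+1).choose m * m.choose k
        = (2*m+1).choose k * ((2*m+1-k).choose (m-k)) :=
      Nat.choose_mul hkm
    have h3 : (2*m+1-k).choose ((j-k)+(m-k)) * ((j-k)+(m-k)).choose (j-k)
        = (2*m+1-k).choose (j-k) * ((2*m+1-k)-(j-k)).choose (((j-k)+(m-k))-(j-k)) :=
      Nat.choose_mul (by omega)
    have h4 : (2*m+1-k).choose ((j-k)+(m-k)) * ((j-k)+(m-k)).choose (m-k)
        = (2*m+1-k).choose (m-k) * ((2*m+1-k)-(m-k)).choose (((j-k)+(m-k))-(m-k)) :=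
      Nat.choose_mul (by omega)
    have e1 : (2*m+1-k)-(j-k) = 2*m+1-j := by omega
    have e2 : ((j-k)+(m-k))-(j-k) = m-k := by omega
    have e3 : (2*m+1-k)-(m-k) = m+1 := by omega
    have e4 : ((j-k)+(m-k))-(m-k) = j-k := by omega
    rw [e1, e2] at h3
    rw [e3, e4] at h4
    have hsymm : ((j-k)+(m-k)).choose (j-k) = ((j-k)+(m-k)).choose (m-k) :=
      Nat.choose_symm_add
    calc (2*m+1).choose j * (j.choose k * ((2*m+1-j).choose (m-k)))
        = ((2*m+1).choose j * j.choose k) * ((2*m+1-j).choose (m-k)) := by ring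
      _ = (2*m+1).choose k * ((2*m+1-k).choose (j-k) * ((2*m+1-j).choose (m-k))) := by
          rw [h1]; ring
      _ = (2*m+1).choose k * ((2*m+1-k).choose ((j-k)+(m-k)) * ((j-k)+(m-k)).choose (j-k)) := by
          rw [h3]
      _ = (2*m+1).choose k * ((2*m+1-k).choose ((j-k)+(m-k)) * ((j-k)+(m-k)).choose (m-k)) := by
          rw [hsymm]
      _ = (2*m+1).choose k * ((2*m+1-k).choose (m-k) * ((m+1).choose (j-k))) := by
          rw [h4]
      _ = ((2*m+1).choose k * (2*m+1-k).choose (m-k)) * ((m+1).choose (j-k)) := by ring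
      _ = (2*m+1).choose m * (m.choose k * ((m+1).choose (j-k))) := by
          rw [← h2]; ring
  · have z1 : (2*m+1-j).choose (m-k) = 0 := Nat.choose_eq_zero_of_lt (by omega)
    have z2 : (m+1).choose (j-k) = 0 := Nat.choose_eq_zero_of_lt (by omega)
    rw [z1, z2]; ring

private lemma coeff_one_sub_X_pow (m k : ℕ) :
    ((1 - X : ℤ[X]) ^ m).coeff k = (-1) ^ k * m.choose k := by
  induction m generalizing k with
  | zero =>
    simp only [pow_zero, coeff_one]
    cases k with
    | zero => simp
    | succ k => simp [Nat.choose_eq_zero_of_lt]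
  | succ m ih =>
    have : (1 - X : ℤ[X]) ^ (m+1) = (1 - X)^m - X * (1 - X)^m := by ring
    rw [this, coeff_sub]
    cases k with
    | zero => simp [ih]
    | succ k =>
      rw [coeff_X_mul, ih, ih, Nat.choose_succ_succ]
      push_cast
      ring

private lemma coeff_one_sub_X_sq_pow (m k : ℕ) :
    ((1 - X ^ 2 : ℤ[X]) ^ m).coeff k =
      if 2 ∣ k then (-1 : ℤ) ^ (k / 2) * (m.choose (k / 2) : ℤ) else 0 := by
  induction m generalizing k with
  | zero =>
    simp only [pow_zero, coeff_one]
    rcases Nat.eq_zero_or_pos k with hk | hk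
    · subst hk; simp
    · have : k ≠ 0 := hk.ne'
      by_cases h2 : 2 ∣ k
      · have : k / 2 ≠ 0 := by omega
        simp [h2, Nat.choose_eq_zero_of_lt, Nat.pos_of_ne_zero this, hk.ne']
      · simp [h2, hk.ne']
  | succ m ih =>
    have hs : (1 - X ^ 2 : ℤ[X]) ^ (m+1) = (1 - X^2)^m - X^2 * (1 - X^2)^m := by ring
    rw [hs, coeff_sub]
    match k with
    | 0 => simp [ih]
    | 1 =>
      have : ((X:ℤ[X])^2 * (1 - X^2)^m).coeff 1 = 0 := by
        rw [coeff_X_pow_mul']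
        simp
      rw [this, ih]
      norm_num
    | (k+2) =>
      have : ((X:ℤ[X])^2 * (1 - X^2)^m).coeff (k+2) = ((1 - X^2 :ℤ[X])^m).coeff k :=
        coeff_X_pow_mul ((1 - X^2 :ℤ[X])^m) 2 k
      rw [this, ih, ih]
      by_cases h2 : 2 ∣ k
      · have h2' : 2 ∣ (k+2) := by omega
        have he : (k+2)/2 = k/2 + 1 := by omega
        rw [if_pos h2, if_pos h2', if_pos h2', he, Nat.choose_succ_succ']
        push_cast
        ring
      · have h2' : ¬ 2 ∣ (k+2) := by omega
        rw [if_neg h2, if_neg h2', if_neg h2']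
        ring

private lemma lemB (m j : ℕ) :
    ∑ k ∈ Finset.range (j + 1), (-1 : ℤ) ^ k * m.choose k * ((m + 1).choose (j - k)) =
      (-1) ^ (j / 2) * m.choose (j / 2) := by
  have h1 : ((1 - X : ℤ[X]) ^ m * (1 + X) ^ (m + 1)).coeff j =
      ∑ k ∈ Finset.range (j + 1), (-1 : ℤ) ^ k * m.choose k * ((m + 1).choose (j - k)) := by
    rw [coeff_mul, Finset.Nat.sum_antidiagonal_eq_sum_range_succ_mk]
    refine Finset.sum_congr rfl fun k _ => ?_
    rw [coeff_one_sub_X_pow, coeff_one_add_X_pow]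
  have h2 : (1 - X : ℤ[X]) ^ m * (1 + X) ^ (m + 1)
      = (1 - X^2)^m + X * (1 - X^2)^m := by
    have : ((1:ℤ[X]) - X^2) = (1 - X) * (1 + X) := by ring
    rw [this, mul_pow, pow_succ]
    ring
  rw [← h1, h2, coeff_add, coeff_one_sub_X_sq_pow]
  cases j with
  | zero => simp
  | succ j =>
    rw [coeff_X_mul, coeff_one_sub_X_sq_pow]
    by_cases h : 2 ∣ j
    · have h' : ¬ 2 ∣ (j+1) := by omega
      have he : j / 2 = (j+1) / 2 := by omega
      rw [if_neg h', if_pos h, he, zero_add]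
    · have h' : 2 ∣ (j+1) := by omega
      rw [if_pos h', if_neg h, add_zero]

/-- Middle-row entries for odd order `N = 2m+1`:
`C(2m+1,j)·Φ^{2m+1}_{m,j} = (−1)^{⌊j/2⌋}·C(m,⌊j/2⌋)·C(2m+1,m)`. -/
theorem symKrawtchouk_middle_row_odd (m j : ℕ) (hj : j ≤ 2 * m + 1) :
    ((2 * m + 1).choose j : ℤ) * symKrawtchouk (2 * m + 1) m j =
      (-1 : ℤ) ^ (j / 2) * (m.choose (j / 2) : ℤ) * ((2 * m + 1).choose m : ℤ) := by
  unfold symKrawtchouk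
  rw [Finset.mul_sum]
  have key : ∀ k ∈ Finset.range (j + 1),
      ((2 * m + 1).choose j : ℤ) *
        (if k ≤ m then (-1 : ℤ) ^ k * (j.choose k) * ((2 * m + 1 - j).choose (m - k)) else 0)
      = ((-1 : ℤ) ^ k * m.choose k * ((m + 1).choose (j - k))) * ((2 * m + 1).choose m : ℤ) := by
    intro k hk
    have hkj : k ≤ j := by simpa [Nat.lt_succ_iff] using hk
    by_cases hkm : k ≤ m
    · rw [if_pos hkm]
      have := lemA m j k hkj hkm hj
      have hcast : ((2 * m + 1).choose j : ℤ) * (j.choose k * ((2 * m + 1 - j).choose (m - k)))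
          = ((2 * m + 1).choose m : ℤ) * (m.choose k * ((m + 1).choose (j - k))) := by
        exact_mod_cast congrArg (Nat.cast : ℕ → ℤ) this
      calc ((2 * m + 1).choose j : ℤ) *
            ((-1 : ℤ) ^ k * (j.choose k) * ((2 * m + 1 - j).choose (m - k)))
          = (-1:ℤ)^k * (((2 * m + 1).choose j : ℤ) *
              (j.choose k * ((2 * m + 1 - j).choose (m - k)))) := by ring
        _ = (-1:ℤ)^k * (((2 * m + 1).choose m : ℤ) *
              (m.choose k * ((m + 1).choose (j - k)))) := by rw [hcast]
        _ = ((-1 : ℤ) ^ k * m.choose k * ((m + 1).choose (j - k))) *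
              ((2 * m + 1).choose m : ℤ) := by ring
    · rw [if_neg hkm]
      have : m.choose k = 0 := Nat.choose_eq_zero_of_lt (by omega)
      rw [this]
      push_cast
      ring
  rw [Finset.sum_congr rfl key, ← Finset.sum_mul, lemB]
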